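/- arXiv:2209.11684 — 4 statements merged into one kernel-verified Lean document; each statement's English description precedes it below -/
import Mathlib

section
/- Let Φ : M_d → M_d be a unital positive linear map. Then for every positive definite matrix x, Φ(log x) ≤ log Φ(x) in the Loewner (positive semidefinite) order. -/
open Matrix
open scoped ComplexOrder

open MeasureTheory Set Filter

noncomputable section

namespace LogAux

lemma cs_vec (a b : Fin d → ℂ) :
    ‖dotProduct (star a) b‖ ^ 2
      ≤ (dotProduct (star a) a).re * (dotProduct (star b) b).re := by
  have h := norm_inner_le_norm (𝕜 := ℂ) ((WithLp.equiv 2 (Fin d → ℂ)).symm a)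
    ((WithLp.equiv 2 (Fin d → ℂ)).symm b)
  change ‖b ⬝ᵥ star a‖ ≤ _ at h
  rw [dotProduct_comm] at h
  have ha : (dotProduct (star a) a).re = ‖(WithLp.equiv 2 (Fin d → ℂ)).symm a‖ ^ 2 := by
    rw [← inner_self_eq_norm_sq (𝕜 := ℂ), RCLike.re_to_complex, dotProduct_comm]
    rfl
  have hb : (dotProduct (star b) b).re = ‖(WithLp.equiv 2 (Fin d → ℂ)).symm b‖ ^ 2 := by
    rw [← inner_self_eq_norm_sq (𝕜 := ℂ), RCLike.re_to_complex, dotProduct_comm]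
    rfl
  rw [ha, hb]
  calc ‖dotProduct (star a) b‖ ^ 2
      ≤ (‖(WithLp.equiv 2 (Fin d → ℂ)).symm a‖ * ‖(WithLp.equiv 2 (Fin d → ℂ)).symm b‖) ^ 2 :=
        pow_le_pow_left₀ (norm_nonneg _) h 2
    _ = _ := by ring

section
open scoped MatrixOrder

lemma cs_psd {Q : Matrix (Fin d) (Fin d) ℂ} (hQ : Q.PosSemidef) (u v : Fin d → ℂ) :
    ‖star u ⬝ᵥ Q *ᵥ v‖ ^ 2 ≤ (star u ⬝ᵥ Q *ᵥ u).re * (star v ⬝ᵥ Q *ᵥ v).re := by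
  have hB : (CFC.sqrt Q).IsHermitian := (CFC.sqrt_nonneg Q).posSemidef.1
  have key : ∀ w z : Fin d → ℂ, star w ⬝ᵥ Q *ᵥ z = star (CFC.sqrt Q *ᵥ w) ⬝ᵥ (CFC.sqrt Q *ᵥ z) := by
    intro w z
    rw [star_mulVec, hB, ← Matrix.dotProduct_mulVec, Matrix.mulVec_mulVec, CFC.sqrt_mul_sqrt_self Q hQ.nonneg]
  rw [key u v, key u u, key v v]
  exact cs_vec _ _

end

/-- Conjugation of a diagonal matrix by a unitary. -/
def cf (U : Matrix.unitaryGroup (Fin d) ℂ) (c : Fin d → ℂ) : Matrix (Fin d) (Fin d) ℂ :=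
  (U : Matrix (Fin d) (Fin d) ℂ) * Matrix.diagonal c * star (U : Matrix (Fin d) (Fin d) ℂ)

/-- Spectral projections. -/
def Pm (U : Matrix.unitaryGroup (Fin d) ℂ) (i : Fin d) : Matrix (Fin d) (Fin d) ℂ :=
  cf U (fun j => if j = i then 1 else 0)

variable (U : Matrix.unitaryGroup (Fin d) ℂ)

lemma cf_one : cf U (fun _ => 1) = 1 := by
  have h : (Matrix.diagonal fun _ : Fin d => (1 : ℂ)) = 1 := Matrix.diagonal_one
  rw [cf, h, mul_one]
  exact Matrix.mem_unitaryGroup_iff.mp U.2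

lemma cf_add (a b : Fin d → ℂ) : cf U a + cf U b = cf U (fun i => a i + b i) := by
  simp only [cf]
  rw [← Matrix.add_mul, ← Matrix.mul_add, Matrix.diagonal_add]

lemma cf_smul (c : ℂ) (a : Fin d → ℂ) : c • cf U a = cf U (fun i => c * a i) := by
  have h : Matrix.diagonal (fun i => c * a i) = c • Matrix.diagonal a := by
    rw [← Matrix.diagonal_smul]
    rfl
  rw [cf, cf, h, Matrix.mul_smul, Matrix.smul_mul]

lemma cf_herm (r : Fin d → ℝ) : (cf U fun i => (r i : ℂ)).IsHermitian := by
  have hs : star (fun i => (r i : ℂ)) = fun i => (r i : ℂ) := by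
    funext i
    simp [Complex.star_def, Complex.conj_ofReal]
  show (cf U fun i => (r i : ℂ))ᴴ = _
  simp only [cf, ← Matrix.star_eq_conjTranspose] at hs ⊢
  simp only [StarMul.star_mul, star_star, Matrix.star_eq_conjTranspose (Matrix.diagonal _),
    Matrix.diagonal_conjTranspose, hs, Matrix.mul_assoc]

lemma cf_quad (c : Fin d → ℂ) (v : Fin d → ℂ) :
    star v ⬝ᵥ (cf U c) *ᵥ v
      = ∑ i, c i * (Complex.normSq ((star (U : Matrix (Fin d) (Fin d) ℂ) *ᵥ v) i) : ℂ) := by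
  set M := (U : Matrix (Fin d) (Fin d) ℂ)
  set w := star M *ᵥ v with hw
  have h1 : (cf U c) *ᵥ v = M *ᵥ (Matrix.diagonal c *ᵥ w) := by
    rw [cf, Matrix.mulVec_mulVec, Matrix.mulVec_mulVec]
  have h2 : star v ᵥ* M = star w := by
    rw [hw, star_mulVec, ← Matrix.star_eq_conjTranspose, star_star]
  rw [h1, Matrix.dotProduct_mulVec, h2]
  simp only [dotProduct, Matrix.mulVec_diagonal, Pi.star_apply]
  congr 1
  funext i
  rw [Complex.star_def]
  rw [show (starRingEnd ℂ) (w i) * (c i * w i) = c i * ((w i) * (starRingEnd ℂ) (w i)) by ring,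
    Complex.mul_conj]

lemma cf_eq_sum (c : Fin d → ℂ) : cf U c = ∑ i, c i • Pm U i := by
  have h : Matrix.diagonal c
      = ∑ i, c i • Matrix.diagonal (fun j => if j = i then (1 : ℂ) else 0) := by
    ext j k
    rw [Matrix.sum_apply]
    simp only [Matrix.smul_apply, Matrix.diagonal_apply, smul_eq_mul, mul_ite, mul_one, mul_zero]
    by_cases hjk : j = k
    · subst hjk
      simp [Finset.sum_ite_eq]
    · simp [hjk]
  rw [cf, h, Finset.mul_sum, Finset.sum_mul]
  refine Finset.sum_congr rfl fun i _ => ?_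
  rw [Matrix.mul_smul, Matrix.smul_mul]
  rfl

lemma dot_sum {m : Type*} [Fintype m] (M : m → Matrix (Fin d) (Fin d) ℂ) (u v : Fin d → ℂ) :
    star u ⬝ᵥ (∑ i, M i) *ᵥ v = ∑ i, star u ⬝ᵥ (M i) *ᵥ v := by
  classical
  have h : ∀ s : Finset m,
      star u ⬝ᵥ (∑ i ∈ s, M i) *ᵥ v = ∑ i ∈ s, star u ⬝ᵥ (M i) *ᵥ v := by
    intro s
    induction s using Finset.induction_on with
    | empty => simp [Matrix.zero_mulVec]
    | insert _ _ hnot ih =>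
        rw [Finset.sum_insert hnot, Finset.sum_insert hnot, Matrix.add_mulVec,
          dotProduct_add, ih]
  exact h _

lemma dot_smul (c : ℂ) (M : Matrix (Fin d) (Fin d) ℂ) (u v : Fin d → ℂ) :
    star u ⬝ᵥ (c • M) *ᵥ v = c * (star u ⬝ᵥ M *ᵥ v) := by
  rw [Matrix.smul_mulVec, dotProduct_smul, smul_eq_mul]

lemma tendsto_ratio {a b : ℝ} (ha : 0 < a) (hb : 0 < b) :
    Tendsto (fun s => Real.log (a + s) - Real.log (b + s)) atTop (nhds 0) := by
  have h1 : Tendsto (fun s : ℝ => (a + s) / (b + s)) atTop (nhds 1) := by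
    have h2 : Tendsto (fun s : ℝ => (a - b) / (b + s) + 1) atTop (nhds 1) := by
      have h3 : Tendsto (fun s : ℝ => (a - b) / (b + s)) atTop (nhds 0) :=
        Tendsto.div_atTop tendsto_const_nhds (tendsto_atTop_add_const_left _ b tendsto_id)
      simpa using h3.add tendsto_const_nhds
    apply h2.congr'
    filter_upwards [eventually_gt_atTop 0] with s hs
    have hbs : b + s ≠ 0 := by positivity
    field_simp
    ring
  have h4 : Tendsto (fun s : ℝ => Real.log ((a + s) / (b + s))) atTop (nhds 0) := by
    have := (Real.continuousAt_log (by norm_num : (1:ℝ) ≠ 0)).tendsto.comp h1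
    simpa [Function.comp_def] using this
  apply h4.congr'
  filter_upwards [eventually_gt_atTop 0] with s hs
  rw [Real.log_div (by positivity) (by positivity)]

lemma integral_aux {a b : ℝ} (ha : 0 < a) (hab : a ≤ b) :
    IntegrableOn (fun s => (a + s)⁻¹ - (b + s)⁻¹) (Ioi (0:ℝ)) ∧
      ∫ s in Ioi (0:ℝ), ((a + s)⁻¹ - (b + s)⁻¹) = Real.log b - Real.log a := by
  have hb : 0 < b := lt_of_lt_of_le ha hab
  set g : ℝ → ℝ := fun s => Real.log (a + s) - Real.log (b + s) with hg
  have hderiv : ∀ s ∈ Ici (0:ℝ), HasDerivAt g ((a + s)⁻¹ - (b + s)⁻¹) s := by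
    intro s hs
    have hs' : (0:ℝ) ≤ s := hs
    have h1 : HasDerivAt (fun s : ℝ => Real.log (a + s)) ((a + s)⁻¹) s := by
      have hne : a + s ≠ 0 := by positivity
      have := (Real.hasDerivAt_log hne).comp s ((hasDerivAt_id s).const_add a)
      simpa [Function.comp_def] using this
    have h2 : HasDerivAt (fun s : ℝ => Real.log (b + s)) ((b + s)⁻¹) s := by
      have hne : b + s ≠ 0 := by positivity
      have := (Real.hasDerivAt_log hne).comp s ((hasDerivAt_id s).const_add b)
      simpa [Function.comp_def] using this
    exact h1.sub h2
  have hpos : ∀ s ∈ Ioi (0:ℝ), 0 ≤ (a + s)⁻¹ - (b + s)⁻¹ := by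
    intro s hs
    have hs' : (0:ℝ) < s := hs
    have : (b + s)⁻¹ ≤ (a + s)⁻¹ := by
      apply inv_anti₀ (by positivity) (by linarith)
    linarith
  have htend : Tendsto g atTop (nhds 0) := tendsto_ratio ha hb
  constructor
  · exact integrableOn_Ioi_deriv_of_nonneg' hderiv hpos htend
  · rw [integral_Ioi_of_hasDerivAt_of_nonneg' hderiv hpos htend]
    simp [hg]

lemma integral_log {l : ℝ} (hl : 0 < l) :
    IntegrableOn (fun s => (1 + s)⁻¹ - (l + s)⁻¹) (Ioi (0:ℝ)) ∧
      ∫ s in Ioi (0:ℝ), ((1 + s)⁻¹ - (l + s)⁻¹) = Real.log l := by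
  rcases le_total 1 l with h | h
  · have := integral_aux one_pos h
    simpa using this
  · obtain ⟨hint, hval⟩ := integral_aux hl h
    have hneg : (fun s : ℝ => (1 + s)⁻¹ - (l + s)⁻¹) = fun s => -((l + s)⁻¹ - (1 + s)⁻¹) := by
      funext s; ring
    constructor
    · rw [hneg]; exact hint.neg
    · rw [hneg, integral_neg, hval]
      simp

end LogAux


variable {d : ℕ}

/-- Matrix logarithm of a Hermitian matrix via spectral decomposition (junk value `0`
otherwise). -/
def mlog (A : Matrix (Fin d) (Fin d) ℂ) : Matrix (Fin d) (Fin d) ℂ :=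
  if hA : A.IsHermitian then
    (hA.eigenvectorUnitary : Matrix (Fin d) (Fin d) ℂ) *
      Matrix.diagonal (fun i => (Real.log (hA.eigenvalues i) : ℂ)) *
      star (hA.eigenvectorUnitary : Matrix (Fin d) (Fin d) ℂ)
  else 0

/-- for a unital positive linear map `Φ` on `M_d` and positive definite `x`,
`Φ(log x) ≤ log Φ(x)` in the Loewner order (operator concavity of `log`). -/
theorem log_operator_concave_of_unital_positive
    (Φ : Matrix (Fin d) (Fin d) ℂ →ₗ[ℂ] Matrix (Fin d) (Fin d) ℂ)
    (hunital : Φ 1 = 1)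
    (hpos : ∀ A : Matrix (Fin d) (Fin d) ℂ, A.PosSemidef → (Φ A).PosSemidef)
    (x : Matrix (Fin d) (Fin d) ℂ) (hx : x.PosDef) :
    (mlog (Φ x) - Φ (mlog x)).PosSemidef := by
  classical
  have hxh : x.IsHermitian := hx.1
  set U := hxh.eigenvectorUnitary with hU
  set lam := hxh.eigenvalues with hlam
  have hlam_pos : ∀ i, 0 < lam i := fun i => hx.eigenvalues_pos i
  -- spectral projections of x and their images
  have hP_psd : ∀ i, (LogAux.Pm U i).PosSemidef := by
    intro i
    refine Matrix.PosSemidef.of_dotProduct_mulVec_nonneg ?_ ?_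
    · have hfn : (fun j => if j = i then (1:ℂ) else 0)
          = fun j => (((if j = i then (1:ℝ) else 0) : ℝ) : ℂ) := by
        funext j; split <;> simp
      rw [LogAux.Pm, hfn]
      exact LogAux.cf_herm U _
    · intro v
      rw [LogAux.Pm, LogAux.cf_quad]
      simp only [ite_mul, one_mul, zero_mul]
      rw [Finset.sum_ite_eq' Finset.univ i
        (fun j => (Complex.normSq ((star (U : Matrix (Fin d) (Fin d) ℂ) *ᵥ v) j) : ℂ))]
      simp only [Finset.mem_univ, if_true]
      exact Complex.zero_le_real.mpr (Complex.normSq_nonneg _)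
  have hQ_psd : ∀ i, (Φ (LogAux.Pm U i)).PosSemidef := fun i => hpos _ (hP_psd i)
  set q : (Fin d → ℂ) → Fin d → ℝ := fun v i => (star v ⬝ᵥ Φ (LogAux.Pm U i) *ᵥ v).re with hq
  have hq_nonneg : ∀ v i, 0 ≤ q v i := fun v i => (Complex.nonneg_iff.mp ((hQ_psd i).dotProduct_mulVec_nonneg v)).1
  have hq_c : ∀ (v : Fin d → ℂ) i, star v ⬝ᵥ Φ (LogAux.Pm U i) *ᵥ v = ((q v i : ℝ) : ℂ) := by
    intro v i
    have him : (star v ⬝ᵥ Φ (LogAux.Pm U i) *ᵥ v).im = 0 :=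
      ((Complex.nonneg_iff.mp ((hQ_psd i).dotProduct_mulVec_nonneg v)).2).symm
    apply Complex.ext
    · simp [hq]
    · simp [him]
  have hx_eq : x = LogAux.cf U (fun i => (lam i : ℂ)) := hxh.spectral_theorem
  -- master identity
  have key : ∀ (f : Fin d → ℝ) (w : Fin d → ℂ),
      star w ⬝ᵥ Φ (LogAux.cf U fun i => ((f i : ℝ) : ℂ)) *ᵥ w
        = ((∑ i, f i * q w i : ℝ) : ℂ) := by
    intro f w
    rw [LogAux.cf_eq_sum, map_sum, LogAux.dot_sum]
    simp only [_root_.map_smul, LogAux.dot_smul, hq_c]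
    push_cast
    rfl
  have hvv : ∀ v : Fin d → ℂ, star v ⬝ᵥ (1 : Matrix (Fin d) (Fin d) ℂ) *ᵥ v
      = ((∑ i, Complex.normSq (v i) : ℝ) : ℂ) := by
    intro v
    rw [Matrix.one_mulVec]
    push_cast
    simp only [dotProduct, Pi.star_apply]
    refine Finset.sum_congr rfl fun i _ => ?_
    rw [Complex.star_def, mul_comm, Complex.mul_conj]
  have hone_cast : (fun _ : Fin d => (((1:ℝ)) : ℂ)) = fun _ : Fin d => (1:ℂ) := by norm_num
  have hq_total : ∀ v : Fin d → ℂ, (∑ i, q v i) = ∑ i, Complex.normSq (v i) := by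
    intro v
    have h1 := key (fun _ => (1:ℝ)) v
    rw [hone_cast, LogAux.cf_one, hunital, hvv v] at h1
    have h2 := Complex.ofReal_inj.mp h1
    simpa using h2.symm
  -- Y is positive definite
  have hmlogx : mlog x = LogAux.cf U (fun i => ((Real.log (lam i) : ℝ) : ℂ)) := by
    simp only [mlog]
    rw [dif_pos hxh]
    rfl
  have hY_herm : (Φ x).IsHermitian := by
    have hΦx_eq : Φ x = ∑ i, (lam i : ℂ) • Φ (LogAux.Pm U i) := by
      rw [hx_eq, LogAux.cf_eq_sum, map_sum]
      exact Finset.sum_congr rfl fun i _ => map_smul Φ _ _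
    rw [hΦx_eq]
    show _ᴴ = _
    rw [Matrix.conjTranspose_sum]
    refine Finset.sum_congr rfl fun i _ => ?_
    rw [Matrix.conjTranspose_smul, (hQ_psd i).1]
    congr 1
    simp [Complex.star_def, Complex.conj_ofReal]
  have hY_pd : (Φ x).PosDef := by
    refine Matrix.PosDef.of_dotProduct_mulVec_pos hY_herm fun v hv => ?_
    have hquad : star v ⬝ᵥ (Φ x) *ᵥ v = ((∑ i, lam i * q v i : ℝ) : ℂ) := by
      have h1 := key lam v
      rwa [← hx_eq] at h1
    rw [hquad, show (0:ℂ) = ((0:ℝ):ℂ) by norm_num, Complex.real_lt_real]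
    obtain ⟨i0, hi0⟩ : ∃ i, v i ≠ 0 := Function.ne_iff.mp hv
    have hnormpos : 0 < ∑ i, Complex.normSq (v i) :=
      Finset.sum_pos' (fun i _ => Complex.normSq_nonneg _)
        ⟨i0, Finset.mem_univ _, Complex.normSq_pos.mpr hi0⟩
    have hsumq : 0 < ∑ i, q v i := by rw [hq_total]; exact hnormpos
    obtain ⟨i1, hq1⟩ : ∃ i, 0 < q v i := by
      by_contra hcon
      push_neg at hcon
      have : (∑ i, q v i) ≤ 0 := Finset.sum_nonpos fun i _ => hcon i
      linarith
    exact Finset.sum_pos' (fun i _ => mul_nonneg (hlam_pos i).le (hq_nonneg v i))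
      ⟨i1, Finset.mem_univ _, mul_pos (hlam_pos i1) hq1⟩
  set V := hY_herm.eigenvectorUnitary with hV
  set mu := hY_herm.eigenvalues with hmu
  have hmu_pos : ∀ j, 0 < mu j := fun j => hY_pd.eigenvalues_pos j
  set r : (Fin d → ℂ) → Fin d → ℝ :=
    fun v j => Complex.normSq ((star (V : Matrix (Fin d) (Fin d) ℂ) *ᵥ v) j) with hr
  have hr_nonneg : ∀ (v : Fin d → ℂ) j, 0 ≤ r v j := fun v j => Complex.normSq_nonneg _
  have keyY : ∀ (f : Fin d → ℝ) (w : Fin d → ℂ),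
      star w ⬝ᵥ (LogAux.cf V fun j => ((f j : ℝ) : ℂ)) *ᵥ w
        = ((∑ j, f j * r w j : ℝ) : ℂ) := by
    intro f w
    rw [LogAux.cf_quad]
    push_cast
    rfl
  have hY_eq : Φ x = LogAux.cf V (fun j => (mu j : ℂ)) := hY_herm.spectral_theorem
  have hmlogY : mlog (Φ x) = LogAux.cf V (fun j => ((Real.log (mu j) : ℝ) : ℂ)) := by
    simp only [mlog]
    rw [dif_pos hY_herm]
    rfl
  have hr_total : ∀ v : Fin d → ℂ, (∑ j, r v j) = ∑ i, Complex.normSq (v i) := by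
    intro v
    have h1 := keyY (fun _ => (1:ℝ)) v
    rw [hone_cast, LogAux.cf_one, hvv v] at h1
    have h2 := Complex.ofReal_inj.mp h1
    simpa using h2.symm
  -- Hermitian part
  have hΦmlogx : Φ (mlog x) = ∑ i, ((Real.log (lam i) : ℂ)) • Φ (LogAux.Pm U i) := by
    rw [hmlogx, LogAux.cf_eq_sum, map_sum]
    exact Finset.sum_congr rfl fun i _ => map_smul Φ _ _
  have hherm : (mlog (Φ x) - Φ (mlog x)).IsHermitian := by
    apply Matrix.IsHermitian.sub
    · rw [hmlogY]; exact LogAux.cf_herm V _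
    · rw [hΦmlogx]
      show _ᴴ = _
      rw [Matrix.conjTranspose_sum]
      refine Finset.sum_congr rfl fun i _ => ?_
      rw [Matrix.conjTranspose_smul, (hQ_psd i).1]
      congr 1
      simp [Complex.star_def, Complex.conj_ofReal]
  refine Matrix.PosSemidef.of_dotProduct_mulVec_nonneg hherm fun v => ?_
  have hq1 : star v ⬝ᵥ (mlog (Φ x)) *ᵥ v = ((∑ j, Real.log (mu j) * r v j : ℝ) : ℂ) := by
    rw [hmlogY]; exact keyY (fun j => Real.log (mu j)) v
  have hq2 : star v ⬝ᵥ (Φ (mlog x)) *ᵥ v = ((∑ i, Real.log (lam i) * q v i : ℝ) : ℂ) := by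
    rw [hmlogx]; exact key (fun i => Real.log (lam i)) v
  have hsub : star v ⬝ᵥ (mlog (Φ x) - Φ (mlog x)) *ᵥ v
      = (((∑ j, Real.log (mu j) * r v j) - ∑ i, Real.log (lam i) * q v i : ℝ) : ℂ) := by
    rw [Matrix.sub_mulVec, dotProduct_sub, hq1, hq2]
    push_cast
    ring
  rw [hsub, show (0:ℂ) = ((0:ℝ):ℂ) by norm_num, Complex.real_le_real]
  -- pointwise Choi-type inequality
  have hQ_sum : ∑ i, Φ (LogAux.Pm U i) = 1 := by
    have h1 := LogAux.cf_eq_sum U (fun _ => (1:ℂ))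
    rw [LogAux.cf_one] at h1
    have h2 : ∑ i, LogAux.Pm U i = 1 := by
      simpa using h1.symm
    rw [← map_sum, h2, hunital]
  have choi : ∀ s : ℝ, 0 < s →
      ∑ j, r v j * (mu j + s)⁻¹ ≤ ∑ i, q v i * (lam i + s)⁻¹ := by
    intro s hs
    set u : Fin d → ℂ := (LogAux.cf V fun j => (((mu j + s)⁻¹ : ℝ) : ℂ)) *ᵥ v with hu
    set L : ℝ := ∑ j, r v j * (mu j + s)⁻¹ with hL
    set R : ℝ := ∑ i, q v i * (lam i + s)⁻¹ with hR
    have hmus : ∀ j, 0 < mu j + s := fun j => add_pos (hmu_pos j) hs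
    have hlams : ∀ i, 0 < lam i + s := fun i => add_pos (hlam_pos i) hs
    have hL_nonneg : 0 ≤ L :=
      Finset.sum_nonneg fun j _ => mul_nonneg (hr_nonneg v j) (inv_nonneg.mpr (hmus j).le)
    have hR_nonneg : 0 ≤ R :=
      Finset.sum_nonneg fun i _ => mul_nonneg (hq_nonneg v i) (inv_nonneg.mpr (hlams i).le)
    have hMherm : (LogAux.cf V fun j => (((mu j + s)⁻¹ : ℝ) : ℂ)).IsHermitian :=
      LogAux.cf_herm V _
    -- (a) ⟨u, v⟩ = L
    have ha : star u ⬝ᵥ v = ((L : ℝ) : ℂ) := by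
      rw [hu, star_mulVec, hMherm, ← Matrix.dotProduct_mulVec,
        keyY (fun j => (mu j + s)⁻¹) v]
      norm_cast
      rw [hL]
      exact Finset.sum_congr rfl fun j _ => mul_comm _ _
    -- coordinates of u in the eigenbasis of Φ x
    have hu_coord : star (V : Matrix (Fin d) (Fin d) ℂ) *ᵥ u
        = fun j => ((((mu j + s)⁻¹ : ℝ)) : ℂ) * ((star (V : Matrix (Fin d) (Fin d) ℂ) *ᵥ v) j) := by
      rw [hu, Matrix.mulVec_mulVec]
      have hmm : star (V : Matrix (Fin d) (Fin d) ℂ)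
            * (LogAux.cf V fun j => (((mu j + s)⁻¹ : ℝ) : ℂ))
          = Matrix.diagonal (fun j => (((mu j + s)⁻¹ : ℝ) : ℂ))
            * star (V : Matrix (Fin d) (Fin d) ℂ) := by
        rw [LogAux.cf, ← Matrix.mul_assoc, ← Matrix.mul_assoc,
          Matrix.mem_unitaryGroup_iff'.mp V.2, one_mul]
      rw [hmm, ← Matrix.mulVec_mulVec]
      funext j
      rw [Matrix.mulVec_diagonal]
    have hr_u : ∀ j, r u j = ((mu j + s)⁻¹) ^ 2 * r v j := by
      intro j
      rw [hr]
      simp only [hu_coord]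
      rw [Complex.normSq_mul, Complex.normSq_ofReal]
      ring
    -- (b) ∑ (lam i + s) q u i = L
    have hxs : LogAux.cf U (fun i => ((lam i + s : ℝ) : ℂ)) = x + (s : ℂ) • 1 := by
      rw [show (fun i : Fin d => ((lam i + s : ℝ) : ℂ))
          = fun i => (lam i : ℂ) + (s : ℂ) * 1 from by funext i; push_cast; ring]
      rw [← LogAux.cf_add, ← LogAux.cf_smul, LogAux.cf_one, ← hx_eq]
    have hYs : LogAux.cf V (fun j => ((mu j + s : ℝ) : ℂ)) = Φ x + (s : ℂ) • 1 := by
      rw [show (fun j : Fin d => ((mu j + s : ℝ) : ℂ))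
          = fun j => (mu j : ℂ) + (s : ℂ) * 1 from by funext j; push_cast; ring]
      rw [← LogAux.cf_add, ← LogAux.cf_smul, LogAux.cf_one, ← hY_eq]
    have hb : (∑ i, (lam i + s) * q u i) = L := by
      have h1 := key (fun i => lam i + s) u
      rw [hxs, map_add, _root_.map_smul, hunital, ← hYs, keyY (fun j => mu j + s) u] at h1
      have h4 := Complex.ofReal_inj.mp h1
      rw [← h4, hL]
      refine Finset.sum_congr rfl fun j _ => ?_
      have hne : mu j + s ≠ 0 := (hmus j).ne'
      rw [hr_u j, show (mu j + s) * ((mu j + s)⁻¹ ^ 2 * r v j)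
          = ((mu j + s) * (mu j + s)⁻¹) * ((mu j + s)⁻¹ * r v j) from by ring,
        mul_inv_cancel₀ hne, one_mul, mul_comm]
    -- (c) decomposition of ⟨u, v⟩
    have hc : ((L : ℝ) : ℂ) = ∑ i, star u ⬝ᵥ (Φ (LogAux.Pm U i)) *ᵥ v := by
      rw [← ha, show star u ⬝ᵥ v = star u ⬝ᵥ (1 : Matrix (Fin d) (Fin d) ℂ) *ᵥ v from by
        rw [Matrix.one_mulVec], ← hQ_sum, LogAux.dot_sum]
    -- (d) Cauchy–Schwarz chain
    have hcs : ∀ i, ‖star u ⬝ᵥ (Φ (LogAux.Pm U i)) *ᵥ v‖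
        ≤ Real.sqrt (q u i) * Real.sqrt (q v i) := by
      intro i
      have h1 := LogAux.cs_psd (hQ_psd i) u v
      have h2 : ‖star u ⬝ᵥ (Φ (LogAux.Pm U i)) *ᵥ v‖
          = Real.sqrt (‖star u ⬝ᵥ (Φ (LogAux.Pm U i)) *ᵥ v‖ ^ 2) :=
        (Real.sqrt_sq (norm_nonneg _)).symm
      rw [h2, ← Real.sqrt_mul (hq_nonneg u i)]
      exact Real.sqrt_le_sqrt h1
    have hL_le : L ≤ ∑ i, Real.sqrt (q u i) * Real.sqrt (q v i) := by
      calc L = ‖((L : ℝ) : ℂ)‖ := by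
            rw [Complex.norm_real]
            exact (abs_of_nonneg hL_nonneg).symm
        _ = ‖∑ i, star u ⬝ᵥ (Φ (LogAux.Pm U i)) *ᵥ v‖ := by rw [← hc]
        _ ≤ ∑ i, ‖star u ⬝ᵥ (Φ (LogAux.Pm U i)) *ᵥ v‖ := norm_sum_le _ _
        _ ≤ _ := Finset.sum_le_sum fun i _ => hcs i
    have hprod : ∀ i, Real.sqrt (q u i) * Real.sqrt (q v i)
        = Real.sqrt ((lam i + s) * q u i) * Real.sqrt ((lam i + s)⁻¹ * q v i) := by
      intro i
      rw [Real.sqrt_mul (hlams i).le, Real.sqrt_mul (inv_nonneg.mpr (hlams i).le)]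
      rw [show Real.sqrt (lam i + s) * Real.sqrt (q u i)
            * (Real.sqrt (lam i + s)⁻¹ * Real.sqrt (q v i))
          = (Real.sqrt (lam i + s) * Real.sqrt (lam i + s)⁻¹)
            * (Real.sqrt (q u i) * Real.sqrt (q v i)) from by ring]
      rw [← Real.sqrt_mul (hlams i).le, mul_inv_cancel₀ (hlams i).ne', Real.sqrt_one, one_mul]
    have hCS : (∑ i, Real.sqrt ((lam i + s) * q u i) * Real.sqrt ((lam i + s)⁻¹ * q v i)) ^ 2
        ≤ (∑ i, (lam i + s) * q u i) * (∑ i, (lam i + s)⁻¹ * q v i) := by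
      refine le_trans (Finset.sum_mul_sq_le_sq_mul_sq Finset.univ _ _) (le_of_eq ?_)
      congr 1
      · refine Finset.sum_congr rfl fun i _ => ?_
        rw [Real.sq_sqrt (mul_nonneg (hlams i).le (hq_nonneg u i))]
      · refine Finset.sum_congr rfl fun i _ => ?_
        rw [Real.sq_sqrt (mul_nonneg (inv_nonneg.mpr (hlams i).le) (hq_nonneg v i))]
    have hsum2 : (∑ i, (lam i + s)⁻¹ * q v i) = R := by
      rw [hR]
      exact Finset.sum_congr rfl fun i _ => mul_comm _ _
    have final : L ^ 2 ≤ L * R := by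
      calc L ^ 2
          ≤ (∑ i, Real.sqrt ((lam i + s) * q u i) * Real.sqrt ((lam i + s)⁻¹ * q v i)) ^ 2 := by
            apply pow_le_pow_left₀ hL_nonneg
            rw [← Finset.sum_congr rfl fun i (_ : i ∈ Finset.univ) => hprod i]
            exact hL_le
        _ ≤ (∑ i, (lam i + s) * q u i) * (∑ i, (lam i + s)⁻¹ * q v i) := hCS
        _ = L * R := by rw [hb, hsum2]
    rcases eq_or_lt_of_le hL_nonneg with h0 | h0
    · rw [hL, hR] at *
      rw [← h0]
      exact hR_nonneg
    · have hLL : L * L ≤ L * R := by nlinarith [final]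
      exact le_of_mul_le_mul_left hLL h0
  -- integration
  have hint : ∀ (c : Fin d → ℝ) (l : Fin d → ℝ), (∀ i, 0 < l i) →
      IntegrableOn (fun s => ∑ i, c i * ((1 + s)⁻¹ - (l i + s)⁻¹)) (Ioi (0:ℝ)) ∧
      (∫ s in Ioi (0:ℝ), (∑ i, c i * ((1 + s)⁻¹ - (l i + s)⁻¹)))
        = ∑ i, c i * Real.log (l i) := by
    intro c l hl
    have h1 : ∀ i : Fin d, IntegrableOn (fun s => c i * ((1 + s)⁻¹ - (l i + s)⁻¹)) (Ioi (0:ℝ)) :=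
      fun i => (LogAux.integral_log (hl i)).1.const_mul _
    constructor
    · exact integrable_finset_sum _ fun i _ => h1 i
    · rw [MeasureTheory.integral_finset_sum _ fun i _ => h1 i]
      refine Finset.sum_congr rfl fun i _ => ?_
      rw [MeasureTheory.integral_const_mul, (LogAux.integral_log (hl i)).2]
  obtain ⟨hGint, hGval⟩ := hint (fun i => q v i) lam hlam_pos
  obtain ⟨hHint, hHval⟩ := hint (fun j => r v j) mu hmu_pos
  have hqr : (∑ i, q v i) = ∑ j, r v j := by rw [hq_total, hr_total]
  have hdiff_nonneg : ∀ s ∈ Ioi (0:ℝ),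
      0 ≤ (∑ j, r v j * ((1 + s)⁻¹ - (mu j + s)⁻¹))
        - ∑ i, q v i * ((1 + s)⁻¹ - (lam i + s)⁻¹) := by
    intro s hs
    have hs' : (0:ℝ) < s := hs
    have hchoi := choi s hs'
    have hexp : (∑ j, r v j * ((1 + s)⁻¹ - (mu j + s)⁻¹))
          - ∑ i, q v i * ((1 + s)⁻¹ - (lam i + s)⁻¹)
        = (∑ i, q v i * (lam i + s)⁻¹) - ∑ j, r v j * (mu j + s)⁻¹ := by
      simp only [mul_sub]
      rw [Finset.sum_sub_distrib, Finset.sum_sub_distrib, ← Finset.sum_mul, ← Finset.sum_mul, hqr]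
      ring
    rw [hexp]
    linarith
  have h00 : 0 ≤ ∫ s in Ioi (0:ℝ),
      ((∑ j, r v j * ((1 + s)⁻¹ - (mu j + s)⁻¹))
        - ∑ i, q v i * ((1 + s)⁻¹ - (lam i + s)⁻¹)) :=
    MeasureTheory.setIntegral_nonneg measurableSet_Ioi hdiff_nonneg
  rw [MeasureTheory.integral_sub hHint hGint, hHval, hGval] at h00
  have e1 : (∑ j, Real.log (mu j) * r v j) = ∑ j, r v j * Real.log (mu j) :=
    Finset.sum_congr rfl fun j _ => mul_comm _ _
  have e2 : (∑ i, Real.log (lam i) * q v i) = ∑ i, q v i * Real.log (lam i) :=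
    Finset.sum_congr rfl fun i _ => mul_comm _ _
  rw [sub_nonneg]
  rw [e1, e2]
  linarith
end
end

section
/- Let Φ : M_d → M_d be a unital quantum channel and ρ a positive definite density matrix. Then H(ρ) − H(Φ(ρ)) ≤ tr((ρ − Φ*Φ(ρ)) log ρ), where H(ρ) = tr(ρ log ρ) and Φ* is the trace adjoint of Φ. -/
open Matrix
open scoped ComplexOrder

noncomputable section

variable {d : ℕ}

/-- The ampliation `id_n ⊗ Φ` acting on block matrices. -/
def ampliation (Φ : Matrix (Fin d) (Fin d) ℂ →ₗ[ℂ] Matrix (Fin d) (Fin d) ℂ) (n : ℕ)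
    (M : Matrix (Fin n × Fin d) (Fin n × Fin d) ℂ) : Matrix (Fin n × Fin d) (Fin n × Fin d) ℂ :=
  fun p q => Φ (Matrix.of fun a b => M (p.1, a) (q.1, b)) p.2 q.2

/-- Complete positivity. -/
def IsCompletelyPositive (Φ : Matrix (Fin d) (Fin d) ℂ →ₗ[ℂ] Matrix (Fin d) (Fin d) ℂ) : Prop :=
  ∀ n : ℕ, ∀ M : Matrix (Fin n × Fin d) (Fin n × Fin d) ℂ,
    M.PosSemidef → (ampliation Φ n M).PosSemidef

/-- The entropy functional `H(ρ) = tr(ρ log ρ)`. -/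
def vnEnt (A : Matrix (Fin d) (Fin d) ℂ) : ℝ := ((A * mlog A).trace).re

/-! ### Auxiliary material -/

/-- Spectral projection onto the `i`-th eigenvector. -/
def sproj {A : Matrix (Fin d) (Fin d) ℂ} (hA : A.IsHermitian) (i : Fin d) :
    Matrix (Fin d) (Fin d) ℂ :=
  (hA.eigenvectorUnitary : Matrix (Fin d) (Fin d) ℂ) * Matrix.single i i 1 *
    star (hA.eigenvectorUnitary : Matrix (Fin d) (Fin d) ℂ)

lemma diagonal_eq_sum_aux (f : Fin d → ℂ) :
    Matrix.diagonal f = ∑ i, f i • Matrix.single i i (1 : ℂ) := by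
  ext a b
  simp only [Matrix.sum_apply, Matrix.smul_apply, Matrix.single, Matrix.of_apply,
    Matrix.diagonal_apply, smul_eq_mul, mul_ite, mul_one, mul_zero, ite_and]
  rw [Finset.sum_ite_eq' (Finset.univ) a (fun i => if i = b then f i else 0)]
  simp only [Finset.mem_univ, if_true]

lemma U_diag_U (U : Matrix (Fin d) (Fin d) ℂ) (f : Fin d → ℂ) :
    U * Matrix.diagonal f * star U
      = ∑ i, f i • (U * Matrix.single i i 1 * star U) := by
  rw [diagonal_eq_sum_aux]
  simp only [Finset.mul_sum, Finset.sum_mul, Matrix.mul_smul, Matrix.smul_mul]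

lemma spec_sum {A : Matrix (Fin d) (Fin d) ℂ} (hA : A.IsHermitian) :
    A = ∑ i, ((hA.eigenvalues i : ℝ) : ℂ) • sproj hA i := by
  conv_lhs => rw [hA.spectral_theorem]
  exact U_diag_U _ _

lemma mlog_eq {A : Matrix (Fin d) (Fin d) ℂ} (hA : A.IsHermitian) :
    mlog A = ∑ i, ((Real.log (hA.eigenvalues i) : ℝ) : ℂ) • sproj hA i := by
  rw [mlog, dif_pos hA]
  exact U_diag_U _ _

lemma unitary_star_mul {A : Matrix (Fin d) (Fin d) ℂ} (hA : A.IsHermitian) :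
    star (hA.eigenvectorUnitary : Matrix (Fin d) (Fin d) ℂ) *
      (hA.eigenvectorUnitary : Matrix (Fin d) (Fin d) ℂ) = 1 :=
  Matrix.mem_unitaryGroup_iff'.mp hA.eigenvectorUnitary.2

lemma unitary_mul_star {A : Matrix (Fin d) (Fin d) ℂ} (hA : A.IsHermitian) :
    (hA.eigenvectorUnitary : Matrix (Fin d) (Fin d) ℂ) *
      star (hA.eigenvectorUnitary : Matrix (Fin d) (Fin d) ℂ) = 1 :=
  Matrix.mem_unitaryGroup_iff.mp hA.eigenvectorUnitary.2

lemma stdBasis_diag (i : Fin d) :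
    Matrix.single i i (1 : ℂ) = Matrix.diagonal (Pi.single i 1) := by
  ext a b
  rcases eq_or_ne i a with rfl | h1
  · rcases eq_or_ne i b with rfl | h2
    · simp [Matrix.single, Matrix.diagonal_apply, Pi.single_apply]
    · simp [Matrix.single, Matrix.diagonal_apply, Pi.single_apply, h2, Ne.symm h2]
  · simp [Matrix.single, Matrix.diagonal_apply, Pi.single_apply, h1, Ne.symm h1]

lemma sproj_posSemidef {A : Matrix (Fin d) (Fin d) ℂ} (hA : A.IsHermitian) (i : Fin d) :
    (sproj hA i).PosSemidef := by
  have h1 : (Matrix.single i i (1 : ℂ)).PosSemidef := by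
    rw [stdBasis_diag]
    refine Matrix.PosSemidef.diagonal ?_
    intro j
    rcases eq_or_ne i j with rfl | h
    · simp [Pi.single_apply]
    · simp [Pi.single_apply, h]
  have := h1.mul_mul_conjTranspose_same (hA.eigenvectorUnitary : Matrix (Fin d) (Fin d) ℂ)
  simpa [sproj, Matrix.star_eq_conjTranspose] using this

lemma conj_mul_conj (U E F : Matrix (Fin d) (Fin d) ℂ) (hsm : star U * U = 1) :
    (U * E * star U) * (U * F * star U) = U * (E * F) * star U := by
  rw [Matrix.mul_assoc U F (star U), Matrix.mul_assoc (U * E) (star U),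
    ← Matrix.mul_assoc (star U) U, hsm, Matrix.one_mul, ← Matrix.mul_assoc,
    Matrix.mul_assoc U E F]

lemma sproj_mul_sproj {A : Matrix (Fin d) (Fin d) ℂ} (hA : A.IsHermitian) (i j : Fin d) :
    sproj hA i * sproj hA j = if i = j then sproj hA i else 0 := by
  have h := conj_mul_conj (hA.eigenvectorUnitary : Matrix (Fin d) (Fin d) ℂ)
    (Matrix.single i i 1) (Matrix.single j j 1) (unitary_star_mul hA)
  by_cases hij : i = j
  · subst hij
    simp only [sproj]
    rw [h, Matrix.single_mul_single_same]
    simp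
  · simp only [sproj]
    rw [h, Matrix.single_mul_single_of_ne (h := hij)]
    simp [hij]

lemma trace_sproj {A : Matrix (Fin d) (Fin d) ℂ} (hA : A.IsHermitian) (i : Fin d) :
    (sproj hA i).trace = 1 := by
  rw [sproj, Matrix.trace_mul_comm, ← Matrix.mul_assoc, unitary_star_mul hA, Matrix.one_mul]
  simp [Matrix.trace, Matrix.single, Matrix.diag]

lemma sum_sproj {A : Matrix (Fin d) (Fin d) ℂ} (hA : A.IsHermitian) :
    ∑ i, sproj hA i = 1 := by
  have h1 : ∑ i, Matrix.single i i (1 : ℂ) = (1 : Matrix (Fin d) (Fin d) ℂ) := by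
    have h := diagonal_eq_sum_aux (d := d) (fun _ => (1 : ℂ))
    simp only [one_smul] at h
    rw [← h, Matrix.diagonal_one]
  simp only [sproj, ← Finset.sum_mul, ← Finset.mul_sum, h1, Matrix.mul_one]
  exact unitary_mul_star hA

/-- The trace of a PSD matrix is a nonnegative real. -/
lemma trace_psd_re {Z : Matrix (Fin d) (Fin d) ℂ} (hZ : Z.PosSemidef) :
    0 ≤ Z.trace.re ∧ Z.trace.im = 0 := by
  have hdiag : ∀ i, 0 ≤ Z i i := by
    intro i
    exact hZ.diag_nonneg
  have h' := fun i => Complex.nonneg_iff.mp (hdiag i)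
  constructor
  · rw [Matrix.trace, Complex.re_sum]
    exact Finset.sum_nonneg fun i _ => (h' i).1
  · rw [Matrix.trace, Complex.im_sum]
    exact Finset.sum_eq_zero fun i _ => ((h' i).2).symm

open scoped MatrixOrder in
/-- The trace of a product of two PSD matrices is a nonnegative real. -/
lemma trace_psd_mul {X Y : Matrix (Fin d) (Fin d) ℂ} (hX : X.PosSemidef) (hY : Y.PosSemidef) :
    0 ≤ ((X * Y).trace).re ∧ ((X * Y).trace).im = 0 := by
  obtain ⟨B, rfl⟩ := CStarAlgebra.nonneg_iff_eq_star_mul_self.mp hY.nonneg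
  have h2 : (X * (star B * B)).trace = (B * X * star B).trace := by
    rw [← Matrix.mul_assoc, Matrix.trace_mul_comm, ← Matrix.mul_assoc]
  have h3 : (B * X * star B).PosSemidef := by
    simpa [Matrix.star_eq_conjTranspose] using hX.mul_mul_conjTranspose_same B
  rw [h2]
  exact trace_psd_re h3

/-- `H(ρ) − H(Φ(ρ)) ≤ tr((ρ − Φ*Φ(ρ)) log ρ)` for a unital quantum channel `Φ`
with trace adjoint `Φ*`. -/
theorem entropy_difference_upper_bound
    (Φ Φad : Matrix (Fin d) (Fin d) ℂ →ₗ[ℂ] Matrix (Fin d) (Fin d) ℂ)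
    (hCP : IsCompletelyPositive Φ) (hunital : Φ 1 = 1)
    (htp : ∀ x, (Φ x).trace = x.trace)
    (hadj : ∀ a b : Matrix (Fin d) (Fin d) ℂ, (Φad a * b).trace = (a * Φ b).trace)
    (ρ : Matrix (Fin d) (Fin d) ℂ) (hρ : ρ.PosDef) (hρ1 : ρ.trace = 1) :
    vnEnt ρ - vnEnt (Φ ρ) ≤ (((ρ - Φad (Φ ρ)) * mlog ρ).trace).re := by
  classical
  -- Positivity of Φ
  have hPos : ∀ A : Matrix (Fin d) (Fin d) ℂ, A.PosSemidef → (Φ A).PosSemidef := by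
    intro A hA
    let e : (Fin 1 × Fin d) ≃ Fin d :=
      ⟨fun p => p.2, fun a => (0, a), fun p => Prod.ext (Subsingleton.elim _ _) rfl,
        fun a => rfl⟩
    have hM : (A.submatrix e e).PosSemidef := hA.submatrix e
    have h := hCP 1 _ hM
    have heq : ampliation Φ 1 (A.submatrix e e) = (Φ A).submatrix e e := by
      ext p q
      show Φ (Matrix.of fun a b => (A.submatrix e e) (p.1, a) (q.1, b)) p.2 q.2
          = (Φ A) (e p) (e q)
      have hA' : (Matrix.of fun a b => (A.submatrix e e) (p.1, a) (q.1, b)) = A := by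
        ext a b; rfl
      rw [hA']
      rfl
    rw [heq] at h
    exact (Matrix.posSemidef_submatrix_equiv e).mp h
  have hρH : ρ.IsHermitian := hρ.1
  have hρS : ρ.PosSemidef := hρ.posSemidef
  have hB : (Φ ρ).PosSemidef := hPos ρ hρS
  have hBH : (Φ ρ).IsHermitian := hB.1
  set lam : Fin d → ℝ := hρH.eigenvalues with hlam
  set mu : Fin d → ℝ := hBH.eigenvalues with hmu
  set P : Fin d → Matrix (Fin d) (Fin d) ℂ := sproj hρH with hPdef
  set Q : Fin d → Matrix (Fin d) (Fin d) ℂ := sproj hBH with hQdef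
  set c : Fin d → Fin d → ℝ := fun j i => ((Q j * Φ (P i)).trace).re with hcdef
  have hctr : ∀ j i, 0 ≤ ((Q j * Φ (P i)).trace).re ∧ ((Q j * Φ (P i)).trace).im = 0 :=
    fun j i => trace_psd_mul (sproj_posSemidef hBH j) (hPos _ (sproj_posSemidef hρH i))
  have hc : ∀ j i, (Q j * Φ (P i)).trace = ((c j i : ℝ) : ℂ) := by
    intro j i
    apply Complex.ext
    · simp [hcdef]
    · simp [(hctr j i).2]
  have hc0 : ∀ j i, 0 ≤ c j i := fun j i => (hctr j i).1
  -- (F2) rows of c sum to 1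
  have hsum1 : ∀ j, ∑ i, c j i = 1 := by
    intro j
    have h1 : ∑ i, (Q j * Φ (P i)).trace = 1 := by
      have h2 : ∑ i, (Q j * Φ (P i)).trace = (Q j * Φ (∑ i, P i)).trace := by
        rw [map_sum, Finset.mul_sum, Matrix.trace_sum]
      rw [h2, hPdef, sum_sproj, hunital, Matrix.mul_one, hQdef, trace_sproj]
    rw [← Complex.ofReal_inj]
    push_cast
    rw [← h1]
    exact Finset.sum_congr rfl fun i _ => (hc j i).symm
  -- (F3) the barycenter identity
  have hsum2 : ∀ j, ∑ i, c j i * lam i = mu j := by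
    intro j
    have e1 : ∑ i, ((lam i : ℂ)) * (Q j * Φ (P i)).trace = (Q j * Φ ρ).trace := by
      conv_rhs => rw [show Φ ρ = Φ (∑ i, ((lam i : ℝ) : ℂ) • P i) from by
        rw [← spec_sum hρH]]
      rw [map_sum, Finset.mul_sum, Matrix.trace_sum]
      refine Finset.sum_congr rfl fun i _ => ?_
      rw [_root_.map_smul, Matrix.mul_smul, Matrix.trace_smul, smul_eq_mul]
    have e2 : (Q j * Φ ρ).trace = ((mu j : ℝ) : ℂ) := by
      conv_lhs => rw [show Φ ρ = ∑ k, ((mu k : ℝ) : ℂ) • Q k from spec_sum hBH]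
      rw [Finset.mul_sum, Matrix.trace_sum]
      have h3 : ∀ k ∈ Finset.univ, (Q j * (((mu k : ℝ) : ℂ) • Q k)).trace
          = if k = j then ((mu j : ℝ) : ℂ) else 0 := by
        intro k _
        rw [Matrix.mul_smul, Matrix.trace_smul, hQdef, sproj_mul_sproj]
        rcases eq_or_ne j k with rfl | h
        · simp [trace_sproj, smul_eq_mul]
        · simp [h, Ne.symm h]
      rw [Finset.sum_congr rfl h3, Finset.sum_ite_eq' Finset.univ j]
      simp
    rw [← Complex.ofReal_inj]
    push_cast
    rw [← e2, ← e1]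
    refine Finset.sum_congr rfl fun i _ => ?_
    rw [hc j i]
    push_cast
    ring
  -- reduce the goal
  have hgoal : (((ρ - Φad (Φ ρ)) * mlog ρ).trace).re
      = vnEnt ρ - (((Φ ρ) * Φ (mlog ρ)).trace).re := by
    rw [Matrix.sub_mul, Matrix.trace_sub, Complex.sub_re, hadj]
    rfl
  rw [hgoal]
  refine sub_le_sub_left ?_ (vnEnt ρ)
  -- expand the LHS
  have hLHS : (((Φ ρ) * Φ (mlog ρ)).trace).re
      = ∑ j, ∑ i, mu j * Real.log (lam i) * c j i := by
    have h1 : ((Φ ρ) * Φ (mlog ρ)).trace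
        = ∑ j, ∑ i, ((mu j : ℝ) : ℂ) * ((Real.log (lam i) : ℝ) : ℂ)
            * (Q j * Φ (P i)).trace := by
      conv_lhs => rw [show Φ ρ = ∑ j, ((mu j : ℝ) : ℂ) • Q j from spec_sum hBH]
      conv_lhs => rw [show mlog ρ = ∑ i, ((Real.log (lam i) : ℝ) : ℂ) • P i from mlog_eq hρH]
      rw [map_sum, Finset.sum_mul, Matrix.trace_sum]
      refine Finset.sum_congr rfl fun j _ => ?_
      rw [Finset.mul_sum, Matrix.trace_sum]
      refine Finset.sum_congr rfl fun i _ => ?_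
      rw [_root_.map_smul, smul_mul_assoc, mul_smul_comm, Matrix.trace_smul, Matrix.trace_smul]
      simp only [smul_eq_mul]
      ring
    rw [h1, Complex.re_sum]
    refine Finset.sum_congr rfl fun j _ => ?_
    rw [Complex.re_sum]
    refine Finset.sum_congr rfl fun i _ => ?_
    rw [hc j i]
    push_cast
    simp
  -- expand the RHS
  have hRHS : vnEnt (Φ ρ) = ∑ j, mu j * Real.log (mu j) := by
    have h1 : ((Φ ρ) * mlog (Φ ρ)).trace
        = ∑ j, ((mu j : ℝ) : ℂ) * ((Real.log (mu j) : ℝ) : ℂ) := by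
      conv_lhs => rw [show mlog (Φ ρ)
        = ∑ k, ((Real.log (mu k) : ℝ) : ℂ) • Q k from mlog_eq hBH]
      conv_lhs => rw [show Φ ρ = ∑ j, ((mu j : ℝ) : ℂ) • Q j from spec_sum hBH]
      rw [Finset.sum_mul, Matrix.trace_sum]
      refine Finset.sum_congr rfl fun j _ => ?_
      rw [Finset.mul_sum, Matrix.trace_sum]
      have h3 : ∀ k ∈ Finset.univ, ((((mu j : ℝ) : ℂ) • Q j)
            * (((Real.log (mu k) : ℝ) : ℂ) • Q k)).trace
          = if k = j then ((mu j : ℝ) : ℂ) * ((Real.log (mu j) : ℝ) : ℂ) else 0 := by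
        intro k _
        rw [smul_mul_assoc, mul_smul_comm, hQdef, sproj_mul_sproj, Matrix.trace_smul,
          Matrix.trace_smul]
        rcases eq_or_ne j k with rfl | h
        · simp [trace_sproj, smul_eq_mul, mul_comm]
        · simp [h, Ne.symm h]
      rw [Finset.sum_congr rfl h3, Finset.sum_ite_eq' Finset.univ j]
      simp
    rw [vnEnt, h1, Complex.re_sum]
    refine Finset.sum_congr rfl fun j _ => ?_
    push_cast
    simp
  rw [hLHS, hRHS]
  -- the scalar Jensen step
  refine Finset.sum_le_sum fun j _ => ?_
  have hmuj : 0 ≤ mu j := hB.eigenvalues_nonneg j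
  have hjensen : ∑ i, c j i * Real.log (lam i) ≤ Real.log (mu j) := by
    have h := (strictConcaveOn_log_Ioi.concaveOn).le_map_sum
      (t := Finset.univ) (w := c j) (p := lam)
      (fun i _ => hc0 j i) (hsum1 j) (fun i _ => Set.mem_Ioi.mpr (hρ.eigenvalues_pos i))
    rw [show ∑ i, c j i • lam i = mu j from by
      simpa only [smul_eq_mul] using hsum2 j] at h
    simpa only [smul_eq_mul] using h
  calc ∑ i, mu j * Real.log (lam i) * c j i
      = mu j * ∑ i, c j i * Real.log (lam i) := by
        rw [Finset.mul_sum]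
        exact Finset.sum_congr rfl fun i _ => by ring
    _ ≤ mu j * Real.log (mu j) := mul_le_mul_of_nonneg_left hjensen hmuj
end
end

section
/- Let Φ : M_d → M_d be a unital quantum channel with multiplicative domain N = {x : Φ(y)Φ(x) = Φ(yx) and Φ(x)Φ(y) = Φ(xy) for all y}. Then Φ restricted to N is a *-homomorphism, and for all x, y in N, tr(Φ(x)Φ(y)) = tr(xy); in particular Φ*∘Φ restricted to N is the identity map, where Φ* is the trace adjoint of Φ. -/
open Matrix
open scoped ComplexOrder

noncomputable section

variable {d : ℕ}

/-- The multiplicative domain of a unital completely positive map. -/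
def multDomain (Φ : Matrix (Fin d) (Fin d) ℂ →ₗ[ℂ] Matrix (Fin d) (Fin d) ℂ) :
    Set (Matrix (Fin d) (Fin d) ℂ) :=
  {x | ∀ y : Matrix (Fin d) (Fin d) ℂ, Φ y * Φ x = Φ (y * x) ∧ Φ x * Φ y = Φ (x * y)}

/-- A CP map is positive (PSD-preserving). -/
lemma IsCompletelyPositive.posMap {Φ : Matrix (Fin d) (Fin d) ℂ →ₗ[ℂ] Matrix (Fin d) (Fin d) ℂ}
    (hCP : IsCompletelyPositive Φ) {A : Matrix (Fin d) (Fin d) ℂ} (hA : A.PosSemidef) :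
    (Φ A).PosSemidef := by
  set e : Fin d ≃ Fin 1 × Fin d :=
    ⟨fun i => (0, i), Prod.snd, fun i => rfl,
      fun p => Prod.ext (Subsingleton.elim _ _) rfl⟩ with he
  have hM : (A.submatrix e.symm e.symm).PosSemidef := hA.submatrix _
  have h := hCP 1 _ hM
  have heq : ampliation Φ 1 (A.submatrix e.symm e.symm) = (Φ A).submatrix e.symm e.symm := rfl
  rw [heq] at h
  exact (posSemidef_submatrix_equiv e.symm).mp h

/-- Every Hermitian matrix is a difference of two PSD matrices. -/
lemma Matrix.IsHermitian.exists_posSemidef_sub {A : Matrix (Fin d) (Fin d) ℂ} (hA : A.IsHermitian) :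
    ∃ P Q : Matrix (Fin d) (Fin d) ℂ, P.PosSemidef ∧ Q.PosSemidef ∧ A = P - Q := by
  set U : Matrix (Fin d) (Fin d) ℂ := (hA.eigenvectorUnitary : Matrix (Fin d) (Fin d) ℂ)
  refine ⟨U * diagonal (fun i => ((max (hA.eigenvalues i) 0 : ℝ) : ℂ)) * Uᴴ,
          U * diagonal (fun i => ((max (-hA.eigenvalues i) 0 : ℝ) : ℂ)) * Uᴴ, ?_, ?_, ?_⟩
  · exact (posSemidef_diagonal_iff.mpr fun i =>
      Complex.zero_le_real.mpr (le_max_right _ _)).mul_mul_conjTranspose_same U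
  · exact (posSemidef_diagonal_iff.mpr fun i =>
      Complex.zero_le_real.mpr (le_max_right _ _)).mul_mul_conjTranspose_same U
  · have hfun : (RCLike.ofReal ∘ hA.eigenvalues : Fin d → ℂ) =
        fun i => ((max (hA.eigenvalues i) 0 : ℝ) : ℂ) - ((max (-hA.eigenvalues i) 0 : ℝ) : ℂ) := by
      funext i
      simp only [Function.comp_apply]
      have : (max (hA.eigenvalues i) 0 : ℝ) - max (-hA.eigenvalues i) 0 = hA.eigenvalues i := by
        rcases le_total (hA.eigenvalues i) 0 with h | h
        · rw [max_eq_right h, max_eq_left (by linarith)]; ring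
        · rw [max_eq_left h, max_eq_right (by linarith)]; ring
      conv_lhs => rw [← this]
      exact RCLike.ofReal_sub _ _
    conv_lhs => rw [hA.spectral_theorem, hfun]
    rw [Unitary.conjStarAlgAut_apply, ← diagonal_sub, Matrix.mul_sub, Matrix.sub_mul, star_eq_conjTranspose]

/-- A positive map preserves adjoints. -/
lemma IsCompletelyPositive.map_conjTranspose
    {Φ : Matrix (Fin d) (Fin d) ℂ →ₗ[ℂ] Matrix (Fin d) (Fin d) ℂ}
    (hCP : IsCompletelyPositive Φ) (x : Matrix (Fin d) (Fin d) ℂ) :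
    Φ xᴴ = (Φ x)ᴴ := by
  have herm : ∀ A : Matrix (Fin d) (Fin d) ℂ, A.IsHermitian → (Φ A).IsHermitian := by
    intro A hA
    obtain ⟨P, Q, hP, hQ, rfl⟩ := hA.exists_posSemidef_sub
    rw [map_sub]
    exact (hCP.posMap hP).isHermitian.sub (hCP.posMap hQ).isHermitian
  have hh : (x + xᴴ).IsHermitian := by
    rw [Matrix.IsHermitian, conjTranspose_add, conjTranspose_conjTranspose, add_comm]
  have hk : (Complex.I • (x - xᴴ)).IsHermitian := by
    rw [Matrix.IsHermitian, conjTranspose_smul, Complex.star_def, Complex.conj_I,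
      conjTranspose_sub, conjTranspose_conjTranspose, neg_smul, ← smul_neg, neg_sub]
  have h2x : (2 : ℂ) • x = (x + xᴴ) - Complex.I • (Complex.I • (x - xᴴ)) := by
    rw [smul_smul, Complex.I_mul_I, neg_one_smul]
    module
  have h2xc : (2 : ℂ) • xᴴ = (x + xᴴ) + Complex.I • (Complex.I • (x - xᴴ)) := by
    rw [smul_smul, Complex.I_mul_I, neg_one_smul]
    module
  have key : (2 : ℂ) • Φ xᴴ = (2 : ℂ) • (Φ x)ᴴ := by
    calc (2 : ℂ) • Φ xᴴ = Φ ((2 : ℂ) • xᴴ) := (Φ.map_smul _ _).symm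
    _ = Φ (x + xᴴ) + Complex.I • Φ (Complex.I • (x - xᴴ)) := by
        rw [h2xc, map_add, Φ.map_smul]
    _ = (Φ (x + xᴴ) - Complex.I • Φ (Complex.I • (x - xᴴ)))ᴴ := by
        rw [conjTranspose_sub, conjTranspose_smul, Complex.star_def, Complex.conj_I,
          (herm _ hh).eq, (herm _ hk).eq, neg_smul, sub_neg_eq_add]
    _ = (Φ ((2 : ℂ) • x))ᴴ := by
        conv_rhs => rw [h2x, map_sub, Φ.map_smul, Φ.map_smul]
        rw [Φ.map_smul]
    _ = (2 : ℂ) • (Φ x)ᴴ := by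
        rw [Φ.map_smul, conjTranspose_smul, Complex.star_def, Complex.conj_ofNat]
  have := smul_right_injective (Matrix (Fin d) (Fin d) ℂ) (two_ne_zero (α := ℂ)) key
  exact this

lemma trace_mul_std {M : Matrix (Fin d) (Fin d) ℂ} (i j : Fin d) :
    (M * Matrix.single j i 1).trace = M i j := by
  rw [Matrix.trace]
  rw [Finset.sum_eq_single i]
  · simp [Matrix.diag]
  · intro b _ hb
    simp [Matrix.diag, hb]
  · simp

/-- on its multiplicative domain `N`, a unital quantum channel `Φ` is a
`*`-homomorphism, `tr(Φ(x)Φ(y)) = tr(xy)` for `x, y ∈ N`, and `Φ*∘Φ` restricted to `N`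
is the identity. -/
theorem multiplicative_domain_properties
    (Φ Φad : Matrix (Fin d) (Fin d) ℂ →ₗ[ℂ] Matrix (Fin d) (Fin d) ℂ)
    (hCP : IsCompletelyPositive Φ) (hunital : Φ 1 = 1)
    (htp : ∀ x, (Φ x).trace = x.trace)
    (hadj : ∀ a b : Matrix (Fin d) (Fin d) ℂ, (Φad a * b).trace = (a * Φ b).trace) :
    (∀ x ∈ multDomain Φ, ∀ y ∈ multDomain Φ, Φ (x * y) = Φ x * Φ y) ∧
    (∀ x ∈ multDomain Φ, Φ xᴴ = (Φ x)ᴴ) ∧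
    (∀ x ∈ multDomain Φ, ∀ y ∈ multDomain Φ, (Φ x * Φ y).trace = (x * y).trace) ∧
    (∀ x ∈ multDomain Φ, Φad (Φ x) = x) := by
  refine ⟨fun x hx y _ => ((hx y).2).symm, fun x _ => hCP.map_conjTranspose x,
    fun x hx y _ => by rw [(hx y).2, htp], fun x hx => ?_⟩
  ext i j
  have h1 : (Φad (Φ x) * Matrix.single j i 1).trace = (x * Matrix.single j i 1).trace := by
    rw [hadj, (hx (Matrix.single j i 1)).2, htp]
  rw [trace_mul_std, trace_mul_std] at h1
  exact h1
end
end

section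
/- For c > 1 define k(c) = (c·ln c − c + 1)/(c−1)². Then k is strictly decreasing on (1,∞), takes values in (0, 1/2), and k(2) = 2·ln 2 − 1. -/
noncomputable section

open Real Set

/-- The comparison constant `k(c) = (c ln c − c + 1)/(c−1)²`. -/
def kfun (c : ℝ) : ℝ := (c * Real.log c - c + 1) / (c - 1) ^ 2


/-- `log c > 2(c-1)/(c+1)` for `c > 1`. -/
lemma aux_log_gt (c : ℝ) (hc : 1 < c) : 2 * (c - 1) / (c + 1) < Real.log c := by
  set φ : ℝ → ℝ := fun x => Real.log x - 2 * (x - 1) / (x + 1) with hφ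
  have hmono : StrictMonoOn φ (Ici 1) := by
    apply strictMonoOn_of_deriv_pos (convex_Ici 1)
    · apply ContinuousOn.sub
      · exact Real.continuousOn_log.mono (by intro x hx; simp at hx ⊢; linarith [hx])
      · apply ContinuousOn.div (by fun_prop) (by fun_prop)
        intro x hx; simp at hx; intro h; linarith
    · intro x hx
      rw [interior_Ici] at hx
      have hx1 : (1:ℝ) < x := hx
      have hx0 : x ≠ 0 := by linarith
      have hxne : x + 1 ≠ 0 := by linarith
      have h1 : HasDerivAt (fun y : ℝ => 2 * (y - 1)) 2 x := by
        simpa using ((hasDerivAt_id x).sub_const 1).const_mul 2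
      have h2 : HasDerivAt (fun y : ℝ => y + 1) 1 x := (hasDerivAt_id x).add_const 1
      have hd : HasDerivAt φ (x⁻¹ - (2 * (x + 1) - 2 * (x - 1) * 1) / (x + 1) ^ 2) x :=
        (Real.hasDerivAt_log hx0).sub (h1.div h2 hxne)
      rw [hd.deriv]
      rw [show (2 * (x + 1) - 2 * (x - 1) * 1) = 4 by ring]
      have : x⁻¹ - 4 / (x + 1) ^ 2 = (x - 1) ^ 2 / (x * (x + 1) ^ 2) := by
        field_simp; ring
      rw [this]
      exact div_pos (pow_pos (by linarith) 2) (by positivity)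
  have := hmono (self_mem_Ici) (le_of_lt hc : (1:ℝ) ≤ c) hc
  simp [hφ, Real.log_one] at this
  linarith [this]

/-- `log c < (c^2-1)/(2c)` for `c > 1`. -/
lemma aux_log_lt (c : ℝ) (hc : 1 < c) : Real.log c < (c ^ 2 - 1) / (2 * c) := by
  set ψ : ℝ → ℝ := fun x => x / 2 - 1 / (2 * x) - Real.log x with hψ
  have hmono : StrictMonoOn ψ (Ici 1) := by
    apply strictMonoOn_of_deriv_pos (convex_Ici 1)
    · apply ContinuousOn.sub
      · apply ContinuousOn.sub (by fun_prop)
        apply ContinuousOn.div (by fun_prop) (by fun_prop)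
        intro x hx; simp at hx; intro h; linarith
      · exact Real.continuousOn_log.mono (by intro x hx; simp at hx ⊢; linarith [hx])
    · intro x hx
      rw [interior_Ici] at hx
      have hx1 : (1:ℝ) < x := hx
      have hx0 : x ≠ 0 := by linarith
      have hxne : 2 * x ≠ 0 := by intro h; apply hx0; linarith
      have h1 : HasDerivAt (fun y : ℝ => y / 2) (1/2) x := by
        simpa using (hasDerivAt_id x).div_const 2
      have h2 : HasDerivAt (fun y : ℝ => 2 * y) 2 x := by
        simpa using (hasDerivAt_id x).const_mul 2
      have h3 : HasDerivAt (fun y : ℝ => 1 / (2 * y)) ((0 * (2*x) - 1 * 2) / (2*x)^2) x :=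
        (hasDerivAt_const x 1).div h2 hxne
      have hd : HasDerivAt ψ (1/2 - (0 * (2*x) - 1 * 2) / (2*x)^2 - x⁻¹) x :=
        (h1.sub h3).sub (Real.hasDerivAt_log hx0)
      rw [hd.deriv]
      have : 1/2 - (0 * (2*x) - 1 * 2) / (2*x)^2 - x⁻¹ = (x - 1)^2 / (2 * x^2) := by
        field_simp; ring
      rw [this]
      exact div_pos (pow_pos (by linarith) 2) (by positivity)
  have := hmono (self_mem_Ici) (le_of_lt hc : (1:ℝ) ≤ c) hc
  simp [hψ, Real.log_one] at this
  have hc0 : (0:ℝ) < c := by linarith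
  have heq : (c ^ 2 - 1) / (2 * c) = c / 2 - c⁻¹ * 2⁻¹ := by
    field_simp
  rw [heq]; linarith [this]

/-- `log c > 1 - 1/c` for `c > 1`, i.e. `c log c - c + 1 > 0`. -/
lemma aux_num_pos (c : ℝ) (hc : 1 < c) : 0 < c * Real.log c - c + 1 := by
  have hc0 : (0:ℝ) < c := by linarith
  have h := Real.log_lt_sub_one_of_pos (x := c⁻¹) (by positivity) (by
    intro h; apply absurd h; rw [inv_eq_one]; linarith)
  rw [Real.log_inv] at h
  have : 1 - c⁻¹ < Real.log c := by linarith
  have h2 : c * (1 - c⁻¹) < c * Real.log c := by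
    exact mul_lt_mul_of_pos_left this hc0
  rw [mul_sub, mul_inv_cancel₀ (ne_of_gt hc0)] at h2
  linarith


lemma kfun_hasDerivAt (x : ℝ) (hx : 1 < x) :
    HasDerivAt kfun ((Real.log x * (x - 1) ^ 2 -
      (x * Real.log x - x + 1) * (2 * (x - 1) ^ 1 * 1)) / ((x - 1) ^ 2) ^ 2) x := by
  have hx0 : x ≠ 0 := by linarith
  have hf : HasDerivAt (fun c : ℝ => c * Real.log c - c + 1) (Real.log x) x := by
    have hmul : HasDerivAt (fun c : ℝ => c * Real.log c) (1 * Real.log x + x * x⁻¹) x :=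
      (hasDerivAt_id x).mul (Real.hasDerivAt_log hx0)
    have := (hmul.sub (hasDerivAt_id x)).add_const 1
    convert this using 1
    · rfl
    · rfl
    · rfl
    · rw [mul_inv_cancel₀ hx0]; ring
  have hg : HasDerivAt (fun c : ℝ => (c - 1) ^ 2) (2 * (x - 1) ^ 1 * 1) x :=
    ((hasDerivAt_id x).sub_const 1).pow 2
  exact hf.div hg (pow_ne_zero _ (sub_ne_zero.mpr (ne_of_gt hx)))

/-- `k` is strictly decreasing on `(1,∞)`, takes values in `(0, 1/2)`,
and `k(2) = 2 ln 2 − 1`. -/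
theorem kfun_properties :
    StrictAntiOn kfun (Set.Ioi 1) ∧
    (∀ c ∈ Set.Ioi (1 : ℝ), kfun c ∈ Set.Ioo 0 (1 / 2)) ∧
    kfun 2 = 2 * Real.log 2 - 1 := by
  refine ⟨?_, ?_, ?_⟩
  · apply strictAntiOn_of_deriv_neg (convex_Ioi 1)
    · apply ContinuousOn.div
      · fun_prop (disch := intro x hx; simp at hx; positivity)
      · fun_prop
      · intro x hx; simp at hx
        exact pow_ne_zero _ (sub_ne_zero.mpr (ne_of_gt hx))
    · intro x hx
      rw [interior_Ioi] at hx
      have hx1 : (1:ℝ) < x := hx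
      rw [(kfun_hasDerivAt x hx1).deriv]
      apply div_neg_of_neg_of_pos
      · have hL := aux_log_gt x hx1
        have hL' : 2 * (x - 1) < (x + 1) * Real.log x := by
          rw [div_lt_iff₀ (by linarith)] at hL
          linarith [hL]
        nlinarith [mul_pos (sub_pos.mpr hx1) (sub_pos.mpr hL')]
      · exact pow_pos (pow_pos (by linarith) 2) 2
  · intro c hc
    simp only [Set.mem_Ioi] at hc
    have hden : (0:ℝ) < (c - 1)^2 := pow_pos (by linarith) 2
    constructor
    · exact div_pos (aux_num_pos c hc) hden
    · rw [kfun, div_lt_iff₀ hden]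
      have hL := aux_log_lt c hc
      rw [lt_div_iff₀ (by linarith : (0:ℝ) < 2 * c)] at hL
      nlinarith [hL]
  · simp [kfun]
    ring
end
end
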